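/- arXiv:hep-th/0011161 — 2 statements merged into one kernel-verified Lean document; each statement's English description precedes it below -/
import Mathlib

section
/- Define Q^l_m(a) = sum_{k=1}^{m} binom(l+1, k) P^{(k)}_m(a), with binom(l+1,k)=0 for k > l+1. Then for n ≥ 1 and m ≥ 2: Q^n_m = Q^{n-1}_m + a_m + sum_{l=1}^{m-1} a_l · Q^{n-1}_{m-l}, and for m = 1: Q^n_1 = Q^{n-1}_1 + a_1. -/
/-- The noncommutative symmetric polynomial
`P_m^{(k)}(a) = Σ_{j_1+···+j_k = m, j_i ≥ 1} a_{j_1}···a_{j_k}`. -/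
noncomputable def Pp {A : Type*} [Ring A] (a : ℕ → A) (k m : ℕ) : A :=
  ∑ j : Fin k → Fin (m + 1),
    if (∀ i, 1 ≤ (j i : ℕ)) ∧ (∑ i, (j i : ℕ)) = m then
      (List.ofFn fun i => a ((j i : ℕ))).prod
    else 0

lemma Pp_eq_zero {A : Type*} [Ring A] (a : ℕ → A) {k m : ℕ} (h : m < k) :
    Pp a k m = 0 := by
  unfold Pp
  refine Finset.sum_eq_zero fun j _ => ?_
  rw [if_neg]
  rintro ⟨h1, h2⟩
  have hkm : (k : ℕ) ≤ m := by
    calc (k:ℕ) = ∑ _i : Fin k, 1 := by simp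
    _ ≤ ∑ i, (j i : ℕ) := Finset.sum_le_sum fun i _ => h1 i
    _ = m := h2
  omega

lemma Pp_one {A : Type*} [Ring A] (a : ℕ → A) {m : ℕ} (hm : 1 ≤ m) :
    Pp a 1 m = a m := by
  unfold Pp
  rw [← (Equiv.funUnique (Fin 1) (Fin (m+1))).symm.sum_comp]
  simp only [Equiv.funUnique_symm_apply]
  rw [Finset.sum_eq_single_of_mem (Fin.last m) (Finset.mem_univ _)]
  · simp [Fin.last, hm]
  · intro x _ hx
    rw [if_neg]
    rintro ⟨h1, h2⟩
    simp only [Fin.forall_fin_one, Fin.sum_univ_one] at h1 h2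
    exact hx (Fin.ext (by simpa [Fin.last] using h2))

lemma Pp_ext {A : Type*} [Ring A] (a : ℕ → A) (k m N : ℕ) (h : m ≤ N) :
    ∑ j : Fin k → Fin (N + 1),
      (if (∀ i, 1 ≤ (j i : ℕ)) ∧ (∑ i, (j i : ℕ)) = m then
        (List.ofFn fun i => a ((j i : ℕ))).prod else 0) = Pp a k m := by
  unfold Pp
  have hle : m + 1 ≤ N + 1 := by omega
  set e : (Fin k → Fin (m+1)) ↪ (Fin k → Fin (N+1)) :=
    ⟨fun j i => Fin.castLE hle (j i), fun j₁ j₂ hj => funext fun i =>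
      Fin.castLE_injective hle (congrFun hj i)⟩ with he
  have h1 : (∑ j : Fin k → Fin (N + 1),
      (if (∀ i, 1 ≤ (j i : ℕ)) ∧ (∑ i, (j i : ℕ)) = m then
        (List.ofFn fun i => a ((j i : ℕ))).prod else 0)) =
      ∑ j ∈ Finset.univ.map e,
      (if (∀ i, 1 ≤ (j i : ℕ)) ∧ (∑ i, (j i : ℕ)) = m then
        (List.ofFn fun i => a ((j i : ℕ))).prod else 0) := by
    refine (Finset.sum_subset (Finset.subset_univ _) ?_).symm
    intro j _ hj
    rw [if_neg]
    rintro ⟨hj1, hj2⟩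
    apply hj
    rw [Finset.mem_map]
    have hb : ∀ i, (j i : ℕ) < m + 1 := by
      intro i
      have : (j i : ℕ) ≤ ∑ i', (j i' : ℕ) :=
        Finset.single_le_sum (f := fun i' => (j i' : ℕ)) (fun _ _ => Nat.zero_le _)
          (Finset.mem_univ i)
      omega
    exact ⟨fun i => ⟨(j i : ℕ), hb i⟩, Finset.mem_univ _,
      funext fun i => Fin.ext rfl⟩
  rw [h1, Finset.sum_map]
  apply Finset.sum_congr rfl
  intro j _
  simp [he]
  rfl

lemma Pp_succ {A : Type*} [Ring A] (a : ℕ → A) {k m : ℕ} (hk : 1 ≤ k) (hm : 1 ≤ m) :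
    Pp a (k + 1) m = ∑ l ∈ Finset.Icc 1 (m - 1), a l * Pp a k (m - l) := by
  conv_lhs => unfold Pp
  rw [← (Fin.consEquiv (fun _ : Fin (k+1) => Fin (m+1))).sum_comp]
  rw [Fintype.sum_prod_type]
  have hterm : ∀ x : Fin (m+1),
      (∑ j : Fin k → Fin (m+1),
        if (∀ i, 1 ≤ ((Fin.consEquiv (fun _ : Fin (k+1) => Fin (m+1))) (x, j) i : ℕ)) ∧
            (∑ i, ((Fin.consEquiv (fun _ : Fin (k+1) => Fin (m+1))) (x, j) i : ℕ)) = m then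
          (List.ofFn fun i => a (((Fin.consEquiv (fun _ : Fin (k+1) => Fin (m+1))) (x, j) i : ℕ))).prod
        else 0) =
      if 1 ≤ (x : ℕ) then a x * Pp a k (m - x) else 0 := by
    intro x
    have hconv : ∀ j : Fin k → Fin (m+1),
        (if (∀ i, 1 ≤ ((Fin.consEquiv (fun _ : Fin (k+1) => Fin (m+1))) (x, j) i : ℕ)) ∧
            (∑ i, ((Fin.consEquiv (fun _ : Fin (k+1) => Fin (m+1))) (x, j) i : ℕ)) = m then
          (List.ofFn fun i => a (((Fin.consEquiv (fun _ : Fin (k+1) => Fin (m+1))) (x, j) i : ℕ))).prod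
        else 0) =
        if 1 ≤ (x:ℕ) then
          (if (∀ i, 1 ≤ (j i : ℕ)) ∧ (∑ i, (j i : ℕ)) = m - (x:ℕ) then
            a x * (List.ofFn fun i => a ((j i : ℕ))).prod else 0)
        else 0 := by
      intro j
      have hx : (x : ℕ) ≤ m := by omega
      simp only [Fin.consEquiv_apply]
      rw [Fin.sum_univ_succ]
      simp only [Fin.cons_zero, Fin.cons_succ, Fin.forall_fin_succ, List.ofFn_succ,
        List.prod_cons]
      by_cases h1 : 1 ≤ (x:ℕ)
      · rw [if_pos h1]
        by_cases h2 : (∀ i, 1 ≤ (j i : ℕ)) ∧ (∑ i, (j i : ℕ)) = m - (x:ℕ)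
        · rw [if_pos h2, if_pos ⟨⟨h1, h2.1⟩, by omega⟩]
        · rw [if_neg h2, if_neg]
          rintro ⟨⟨-, hj1⟩, hj2⟩
          exact h2 ⟨hj1, by omega⟩
      · rw [if_neg h1, if_neg]
        rintro ⟨⟨hx1, -⟩, -⟩
        exact h1 hx1
    rw [Finset.sum_congr rfl fun j _ => hconv j]
    by_cases h1 : 1 ≤ (x:ℕ)
    · simp only [if_pos h1]
      rw [show (∑ j : Fin k → Fin (m+1),
          if (∀ i, 1 ≤ (j i : ℕ)) ∧ (∑ i, (j i : ℕ)) = m - (x:ℕ) then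
            a x * (List.ofFn fun i => a ((j i : ℕ))).prod else 0) =
          a x * ∑ j : Fin k → Fin (m+1),
          (if (∀ i, 1 ≤ (j i : ℕ)) ∧ (∑ i, (j i : ℕ)) = m - (x:ℕ) then
            (List.ofFn fun i => a ((j i : ℕ))).prod else 0) from by
        rw [Finset.mul_sum]
        exact Finset.sum_congr rfl fun j _ => by rw [mul_ite, mul_zero]]
      rw [Pp_ext a k (m - (x:ℕ)) m (by omega)]
    · simp only [if_neg h1, Finset.sum_const_zero]
  rw [Finset.sum_congr rfl fun x _ => hterm x]
  rw [Fin.sum_univ_eq_sum_range (fun x => if 1 ≤ x then a x * Pp a k (m - x) else 0) (m+1)]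
  rw [← Finset.sum_subset (show Finset.Icc 1 (m-1) ⊆ Finset.range (m+1) from fun x hx => by
      rw [Finset.mem_Icc] at hx; rw [Finset.mem_range]; omega)]
  · exact Finset.sum_congr rfl fun x hx => if_pos (Finset.mem_Icc.mp hx).1
  · intro x hx hx2
    rw [Finset.mem_range] at hx
    rw [Finset.mem_Icc] at hx2
    by_cases h1 : 1 ≤ x
    · have hxm : x = m := by omega
      rw [if_pos h1, hxm, Nat.sub_self, Pp_eq_zero a hk, mul_zero]
    · rw [if_neg h1]

/-- `Q^l_m(a) = Σ_{k=1}^m C(l+1,k) P^{(k)}_m(a)` (the convention `C(l+1,k) = 0`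
for `k > l+1` is built into `Nat.choose`). -/
noncomputable def Qp {A : Type*} [Ring A] (a : ℕ → A) (l m : ℕ) : A :=
  ∑ k ∈ Finset.Icc 1 m, ((l + 1).choose k) • Pp a k m

/-- For `n ≥ 1` and `m ≥ 2`:
`Q^n_m = Q^{n-1}_m + a_m + Σ_{l=1}^{m-1} a_l · Q^{n-1}_{m-l}`,
and for `m = 1`: `Q^n_1 = Q^{n-1}_1 + a_1`. -/
theorem Qp_recursion {A : Type*} [Ring A] [Algebra ℂ A] (a : ℕ → A)
    (n : ℕ) (hn : 1 ≤ n) :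
    (∀ m, 2 ≤ m →
      Qp a n m = Qp a (n - 1) m + a m +
        ∑ l ∈ Finset.Icc 1 (m - 1), a l * Qp a (n - 1) (m - l)) ∧
    Qp a n 1 = Qp a (n - 1) 1 + a 1 := by
  have hn1 : n - 1 + 1 = n := by omega
  constructor
  · intro m hm
    have hm1 : (1:ℕ) ≤ m := by omega
    -- Pascal split
    have hsplit : ∀ k ∈ Finset.Icc 1 m,
        ((n + 1).choose k) • Pp a k m =
          (n.choose k) • Pp a k m + (n.choose (k-1)) • Pp a k m := by
      intro k hk
      obtain ⟨k', rfl⟩ : ∃ k', k = k' + 1 :=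
        ⟨k - 1, by have := (Finset.mem_Icc.mp hk).1; omega⟩
      rw [Nat.choose_succ_succ, Nat.add_sub_cancel, add_nsmul, add_comm]
    rw [show Qp a n m = ∑ k ∈ Finset.Icc 1 m, ((n + 1).choose k) • Pp a k m from rfl,
      Finset.sum_congr rfl hsplit, Finset.sum_add_distrib]
    have hQ : (∑ k ∈ Finset.Icc 1 m, (n.choose k) • Pp a k m) = Qp a (n-1) m := by
      unfold Qp; rw [hn1]
    rw [hQ]
    -- second sum
    have hre : (∑ k ∈ Finset.Icc 1 m, (n.choose (k-1)) • Pp a k m) =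
        ∑ j ∈ Finset.Icc 0 (m-1), (n.choose j) • Pp a (j+1) m := by
      rw [show Finset.Icc 1 m = (Finset.Icc 0 (m-1)).map
          (addRightEmbedding 1) from by
        rw [Finset.map_add_right_Icc]
        congr 1
        omega]
      rw [Finset.sum_map]
      exact Finset.sum_congr rfl fun j _ => by simp [addRightEmbedding]
    rw [hre]
    have hins : Finset.Icc 0 (m-1) = insert 0 (Finset.Icc 1 (m-1)) := by
      ext x; simp [Finset.mem_Icc]; omega
    rw [hins, Finset.sum_insert (by simp)]
    rw [Nat.choose_zero_right, one_nsmul, Pp_one a hm1]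
    have hinner : ∀ j ∈ Finset.Icc 1 (m-1),
        (n.choose j) • Pp a (j+1) m =
          ∑ l ∈ Finset.Icc 1 (m-1), a l * ((n.choose j) • Pp a j (m-l)) := by
      intro j hj
      rw [Pp_succ a (Finset.mem_Icc.mp hj).1 hm1, Finset.smul_sum]
      exact Finset.sum_congr rfl fun l _ => (mul_smul_comm _ _ _).symm
    rw [Finset.sum_congr rfl hinner, Finset.sum_comm]
    have hlast : ∀ l ∈ Finset.Icc 1 (m-1),
        (∑ j ∈ Finset.Icc 1 (m-1), a l * ((n.choose j) • Pp a j (m-l))) =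
          a l * Qp a (n-1) (m-l) := by
      intro l hl
      rw [← Finset.mul_sum]
      congr 1
      unfold Qp
      rw [hn1]
      refine (Finset.sum_subset ?_ ?_).symm
      · intro j hj
        rw [Finset.mem_Icc] at hj ⊢
        have hl1 := (Finset.mem_Icc.mp hl).1
        omega
      · intro j hj hj2
        rw [Finset.mem_Icc] at hj hj2
        rw [Pp_eq_zero a (by omega), smul_zero]
    rw [Finset.sum_congr rfl hlast]
    exact (add_assoc _ _ _).symm
  · unfold Qp
    rw [hn1]
    simp only [Finset.Icc_self, Finset.sum_singleton, Nat.choose_one_right,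
      Pp_one a le_rfl, succ_nsmul]
end

section
/- The coproduct of Q^n_m in the Hopf algebra H^dif is given by Δ(Q^n_m) = 1 ⊗ Q^n_m + Q^n_m ⊗ 1 + Σ_{k=1}^{m-1} Q^{n+m-k}_k ⊗ Q^n_{m-k} for m ≥ 2 and n ≥ 0, while Δ(Q^n_1) = 1 ⊗ Q^n_1 + Q^n_1 ⊗ 1. -/
open scoped TensorProduct

/-- The free associative unital `ℂ`-algebra `ℂ⟨a_1, a_2, ...⟩`. -/
abbrev Hdif : Type := FreeAlgebra ℂ ℕ

/-- The generators `a_n`. -/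
noncomputable def gen : ℕ → Hdif := FreeAlgebra.ι ℂ

/-- The coproduct `Δ : H^dif → H^dif ⊗ H^dif`, the unique algebra morphism with
`Δ(a_n) = 1 ⊗ a_n + a_n ⊗ 1 + Σ_{m=1}^{n-1} Q^{n-m}_m(a) ⊗ a_{n-m}`. -/
noncomputable def Δdif : Hdif →ₐ[ℂ] Hdif ⊗[ℂ] Hdif :=
  FreeAlgebra.lift ℂ fun n =>
    1 ⊗ₜ[ℂ] gen n + gen n ⊗ₜ[ℂ] 1 +
      ∑ m ∈ Finset.Icc 1 (n - 1), Qp gen (n - m) m ⊗ₜ[ℂ] gen (n - m)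

/-! ### Auxiliary material for the proof -/

/-- `Pp` reformulated as a sum over `Finset.finAntidiagonal`. -/
noncomputable def PpN {A : Type*} [Ring A] (a : ℕ → A) (k m : ℕ) : A :=
  ∑ f ∈ Finset.finAntidiagonal k m, if ∀ i, 1 ≤ f i then (List.ofFn fun i => a (f i)).prod else 0

open Finset in
lemma sum_fin_eq_PpN {A : Type*} [Ring A] (a : ℕ → A) (k m M : ℕ) (h : m ≤ M) :
    (∑ j : Fin k → Fin (M + 1),
      if (∀ i, 1 ≤ (j i : ℕ)) ∧ (∑ i, (j i : ℕ)) = m then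
        (List.ofFn fun i => a ((j i : ℕ))).prod else 0) = PpN a k m := by
  classical
  have hL : (∑ j : Fin k → Fin (M + 1),
      if (∀ i, 1 ≤ (j i : ℕ)) ∧ (∑ i, (j i : ℕ)) = m then
        (List.ofFn fun i => a ((j i : ℕ))).prod else 0)
      = ∑ j ∈ Finset.univ.filter (fun j : Fin k → Fin (M+1) => (∑ i, (j i : ℕ)) = m),
        if (∀ i, 1 ≤ (j i : ℕ)) then (List.ofFn fun i => a ((j i : ℕ))).prod else 0 := by
    rw [Finset.sum_filter]
    apply Finset.sum_congr rfl
    intro j _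
    by_cases hs : (∑ i, (j i : ℕ)) = m
    · simp [hs]
    · simp [hs]
  rw [hL, PpN]
  refine Finset.sum_nbij' (i := fun j => fun i => (j i : ℕ))
    (j := fun f => fun i => (⟨min (f i) M, by omega⟩ : Fin (M+1))) ?_ ?_ ?_ ?_ ?_
  · intro j hj
    simp only [mem_filter, mem_univ, true_and] at hj
    simp [Finset.mem_finAntidiagonal, hj]
  · intro f hf
    simp only [Finset.mem_finAntidiagonal] at hf
    simp only [mem_filter, mem_univ, true_and]
    have hb : ∀ i, f i ≤ m := by
      intro i
      calc f i ≤ ∑ i, f i := Finset.single_le_sum (f := f) (fun _ _ => Nat.zero_le _) (mem_univ i)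
      _ = m := hf
    rw [← hf]
    apply Finset.sum_congr rfl
    intro i _
    have := hb i
    show min (f i) M = f i
    omega
  · intro j hj
    simp only [mem_filter, mem_univ, true_and] at hj
    funext i
    have hb : (j i : ℕ) ≤ m := by
      calc (j i : ℕ) ≤ ∑ i, (j i : ℕ) :=
        Finset.single_le_sum (f := fun i => (j i : ℕ)) (fun _ _ => Nat.zero_le _) (mem_univ i)
      _ = m := hj
    ext
    simp only [Fin.val_mk]
    omega
  · intro f hf
    simp only [Finset.mem_finAntidiagonal] at hf
    funext i
    have hb : f i ≤ m := by
      calc f i ≤ ∑ i, f i := Finset.single_le_sum (f := f) (fun _ _ => Nat.zero_le _) (mem_univ i)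
      _ = m := hf
    show min (f i) M = f i
    omega
  · intro j hj
    simp only [mem_filter, mem_univ, true_and] at hj
    rfl

lemma Pp_eq_PpN {A : Type*} [Ring A] (a : ℕ → A) (k m : ℕ) : Pp a k m = PpN a k m := by
  rw [Pp]; exact sum_fin_eq_PpN a k m m le_rfl

lemma PpN_zero {A : Type*} [Ring A] (a : ℕ → A) (m : ℕ) :
    PpN a 0 m = if m = 0 then 1 else 0 := by
  rw [PpN]
  rcases Nat.eq_zero_or_pos m with rfl | hm
  · rw [show Finset.finAntidiagonal 0 0 = {(fun i => 0 : Fin 0 → ℕ)} by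
      ext f; simp [Finset.mem_finAntidiagonal]; exact Subsingleton.elim _ _]
    simp
  · rw [show Finset.finAntidiagonal 0 m = ∅ by
      ext f; simp [Finset.mem_finAntidiagonal]; omega]
    rw [Finset.sum_empty, if_neg (by omega)]

lemma PpN_eq_zero_of_lt {A : Type*} [Ring A] (a : ℕ → A) {k m : ℕ} (h : m < k) :
    PpN a k m = 0 := by
  rw [PpN]
  apply Finset.sum_eq_zero
  intro f hf
  rw [Finset.mem_finAntidiagonal] at hf
  rw [if_neg]
  intro hall
  have : (Finset.univ : Finset (Fin k)).card • 1 ≤ ∑ i, f i :=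
    Finset.card_nsmul_le_sum _ _ _ (fun i _ => hall i)
  simp [hf] at this
  omega

open Finset in
lemma PpN_succ {A : Type*} [Ring A] (a : ℕ → A) (k m : ℕ) :
    PpN a (k + 1) m = ∑ x ∈ Finset.Icc 1 m, a x * PpN a k (m - x) := by
  rw [← Pp_eq_PpN, Pp]
  rw [← ((Fin.consEquiv (fun _ : Fin (k+1) => Fin (m+1))).sum_comp
    (g := fun j => if (∀ i, 1 ≤ ((j i : Fin (m+1)) : ℕ)) ∧ (∑ i, ((j i : Fin (m+1)) : ℕ)) = m then
      (List.ofFn fun i => a ((j i : ℕ))).prod else 0))]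
  rw [Fintype.sum_prod_type]
  have step1 : ∀ x : Fin (m+1), ∀ g : Fin k → Fin (m+1),
      (if (∀ i, 1 ≤ ((Fin.consEquiv (fun _ : Fin (k+1) => Fin (m+1))) (x, g) i : ℕ)) ∧
          (∑ i, ((Fin.consEquiv (fun _ : Fin (k+1) => Fin (m+1))) (x, g) i : ℕ)) = m then
        (List.ofFn fun i => a (((Fin.consEquiv (fun _ : Fin (k+1) => Fin (m+1))) (x, g) i : ℕ))).prod
      else 0)
      = if (1 ≤ (x:ℕ) ∧ (∀ i, 1 ≤ (g i : ℕ))) ∧ (x:ℕ) + (∑ i, (g i : ℕ)) = m then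
          a x * (List.ofFn fun i => a ((g i : ℕ))).prod else 0 := by
    intro x g
    simp only [Fin.consEquiv_apply]
    simp only [Fin.forall_fin_succ, Fin.cons_zero, Fin.cons_succ, Fin.sum_univ_succ,
      List.ofFn_succ, List.prod_cons]
  simp only [step1]
  rw [Fin.sum_univ_eq_sum_range (fun x => ∑ g : Fin k → Fin (m+1),
    if (1 ≤ x ∧ ∀ i, 1 ≤ (g i:ℕ)) ∧ x + (∑ i, (g i:ℕ)) = m then
      a x * (List.ofFn fun i => a ((g i : ℕ))).prod else 0)]
  have step2 : ∀ x ∈ Finset.range (m+1),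
      (∑ g : Fin k → Fin (m+1), if (1 ≤ x ∧ ∀ i, 1 ≤ (g i:ℕ)) ∧ x + (∑ i, (g i:ℕ)) = m then
        a x * (List.ofFn fun i => a ((g i : ℕ))).prod else 0)
      = if 1 ≤ x then a x * PpN a k (m - x) else 0 := by
    intro x hx
    rw [Finset.mem_range] at hx
    by_cases h1 : 1 ≤ x
    · rw [if_pos h1, ← sum_fin_eq_PpN a k (m - x) m (by omega), Finset.mul_sum]
      apply Finset.sum_congr rfl
      intro g _
      rw [mul_ite, mul_zero]
      refine if_congr ?_ rfl rfl
      constructor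
      · rintro ⟨⟨_, h2⟩, h3⟩; exact ⟨h2, by omega⟩
      · rintro ⟨h2, h3⟩; exact ⟨⟨h1, h2⟩, by omega⟩
    · rw [if_neg h1]
      apply Finset.sum_eq_zero
      intro g _
      rw [if_neg]
      rintro ⟨⟨h1', _⟩, _⟩
      exact h1 h1'
  rw [Finset.sum_congr rfl step2, ← Finset.sum_filter]
  congr 1
  ext x
  simp only [Finset.mem_filter, Finset.mem_range, Finset.mem_Icc]
  omega

open PowerSeries Finset

/-- The generating series `A(t) = 1 + Σ_{n ≥ 1} a_n t^n`. -/
noncomputable def Aps : PowerSeries Hdif := PowerSeries.mk fun n => if n = 0 then 1 else gen n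

lemma coeff_Aps (n : ℕ) : coeff (R := Hdif) n Aps = if n = 0 then 1 else gen n := coeff_mk n _

lemma coeff_zero_Aps_pow (N : ℕ) : coeff (R := Hdif) 0 (Aps ^ N) = 1 := by
  rw [coeff_zero_eq_constantCoeff, map_pow]
  have : constantCoeff (R := Hdif) Aps = 1 := by
    rw [← coeff_zero_eq_constantCoeff, coeff_Aps]; simp
  rw [this, one_pow]

lemma coeff_sub_one (u : ℕ) :
    coeff (R := Hdif) u (Aps - 1) = if u = 0 then 0 else gen u := by
  rw [map_sub, coeff_Aps, PowerSeries.coeff_one]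
  rcases Nat.eq_zero_or_pos u with rfl | hu
  · simp
  · simp only [if_neg (show ¬u = 0 by omega)]
    rw [sub_zero]

lemma coeff_sub_one_pow (k m : ℕ) :
    coeff (R := Hdif) m ((Aps - 1) ^ k) = PpN gen k m := by
  induction k generalizing m with
  | zero =>
    rw [pow_zero, PowerSeries.coeff_one, PpN_zero]
  | succ k ih =>
    rw [pow_succ', coeff_mul, Finset.Nat.sum_antidiagonal_eq_sum_range_succ_mk, PpN_succ]
    have step : ∀ u ∈ Finset.range (m+1),
        coeff (R := Hdif) u (Aps - 1) * coeff (R := Hdif) (m - u) ((Aps - 1) ^ k)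
        = if 1 ≤ u then gen u * PpN gen k (m - u) else 0 := by
      intro u hu
      rw [coeff_sub_one, ih]
      rcases Nat.eq_zero_or_pos u with rfl | hu1
      · simp
      · rw [if_neg (show ¬u = 0 by omega), if_pos (show 1 ≤ u by omega)]
    rw [Finset.sum_congr rfl step, ← Finset.sum_filter]
    congr 1
    ext x
    simp only [Finset.mem_filter, Finset.mem_range, Finset.mem_Icc]
    omega

lemma coeff_Aps_pow {m : ℕ} (L : ℕ) (hm : 1 ≤ m) :
    coeff (R := Hdif) m (Aps ^ (L + 1)) = Qp gen L m := by
  have hA : Aps ^ (L+1) = ((Aps - 1) + 1) ^ (L + 1) := by rw [sub_add_cancel]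
  rw [hA, (Commute.one_right (Aps - 1)).add_pow, map_sum]
  have step : ∀ k ∈ Finset.range (L+2),
      coeff (R := Hdif) m ((Aps - 1) ^ k * 1 ^ (L + 1 - k) * ((L+1).choose k : PowerSeries Hdif))
      = ((L+1).choose k) • PpN gen k m := by
    intro k _
    rw [one_pow, mul_one]
    have : ((L+1).choose k : PowerSeries Hdif)
        = PowerSeries.C (R := Hdif) (((L+1).choose k : ℕ) : Hdif) := by
      simp [map_natCast]
    rw [this, PowerSeries.coeff_mul_C, coeff_sub_one_pow, nsmul_eq_mul,
      (Nat.cast_commute ((L+1).choose k) (PpN gen k m)).eq]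
  rw [Finset.sum_congr rfl step, Qp]
  simp_rw [Pp_eq_PpN]
  have h1 : ∑ k ∈ Finset.range (L+2), ((L+1).choose k) • PpN gen k m
      = ∑ k ∈ Finset.range (L+2+m), ((L+1).choose k) • PpN gen k m := by
    apply Finset.sum_subset (by intro x; simp; omega)
    intro x _ hx
    rw [Nat.choose_eq_zero_of_lt (by simp at hx ⊢; omega), zero_smul]
  have h2 : ∑ k ∈ Finset.Icc 1 m, ((L+1).choose k) • PpN gen k m
      = ∑ k ∈ Finset.range (L+2+m), ((L+1).choose k) • PpN gen k m := by
    apply Finset.sum_subset (by intro x; simp; omega)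
    intro x hx1 hx2
    simp only [Finset.mem_Icc, not_and, not_le] at hx2
    rcases Nat.eq_zero_or_pos x with rfl | hx
    · rw [PpN_zero, if_neg (by omega), smul_zero]
    · rw [PpN_eq_zero_of_lt gen (show m < x by omega), smul_zero]
  rw [h1, h2]

lemma quad {M : Type*} [AddCommMonoid M] (p : ℕ) (F : ℕ → ℕ → ℕ → ℕ → M) :
    (∑ uv ∈ antidiagonal p, ∑ al ∈ antidiagonal uv.1, ∑ bj ∈ antidiagonal uv.2,
      F al.1 al.2 bj.1 bj.2)
  = ∑ sr ∈ antidiagonal p, ∑ ab ∈ antidiagonal sr.1, ∑ lj ∈ antidiagonal sr.2,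
      F ab.1 lj.1 ab.2 lj.2 := by
  have hL : ∀ uv : ℕ × ℕ, (∑ al ∈ antidiagonal uv.1, ∑ bj ∈ antidiagonal uv.2,
      F al.1 al.2 bj.1 bj.2)
      = ∑ x ∈ antidiagonal uv.1 ×ˢ antidiagonal uv.2, F x.1.1 x.1.2 x.2.1 x.2.2 := by
    intro uv; rw [Finset.sum_product]
  have hR : ∀ sr : ℕ × ℕ, (∑ ab ∈ antidiagonal sr.1, ∑ lj ∈ antidiagonal sr.2,
      F ab.1 lj.1 ab.2 lj.2)
      = ∑ x ∈ antidiagonal sr.1 ×ˢ antidiagonal sr.2, F x.1.1 x.2.1 x.1.2 x.2.2 := by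
    intro sr; rw [Finset.sum_product]
  simp_rw [hL, hR]
  rw [Finset.sum_sigma' (antidiagonal p) (fun uv => antidiagonal uv.1 ×ˢ antidiagonal uv.2)
      (fun _ y => F y.1.1 y.1.2 y.2.1 y.2.2),
    Finset.sum_sigma' (antidiagonal p) (fun sr => antidiagonal sr.1 ×ˢ antidiagonal sr.2)
      (fun _ y => F y.1.1 y.2.1 y.1.2 y.2.2)]
  refine Finset.sum_nbij'
    (i := fun x =>
      ⟨(x.2.1.1 + x.2.2.1, x.2.1.2 + x.2.2.2), ((x.2.1.1, x.2.2.1), (x.2.1.2, x.2.2.2))⟩)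
    (j := fun x =>
      ⟨(x.2.1.1 + x.2.2.1, x.2.1.2 + x.2.2.2), ((x.2.1.1, x.2.2.1), (x.2.1.2, x.2.2.2))⟩)
    ?_ ?_ ?_ ?_ ?_
  · rintro ⟨⟨u, v⟩, ⟨⟨a, l⟩, ⟨b, j⟩⟩⟩ hx
    simp only [mem_sigma, Finset.HasAntidiagonal.mem_antidiagonal, mem_product] at hx ⊢
    refine ⟨by omega, ?_, ?_⟩ <;> trivial
  · rintro ⟨⟨s, r⟩, ⟨⟨a, b⟩, ⟨l, j⟩⟩⟩ hx
    simp only [mem_sigma, Finset.HasAntidiagonal.mem_antidiagonal, mem_product] at hx ⊢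
    refine ⟨by omega, ?_, ?_⟩ <;> trivial
  · rintro ⟨⟨u, v⟩, ⟨⟨a, l⟩, ⟨b, j⟩⟩⟩ hx
    dsimp only
    simp only [mem_sigma, Finset.HasAntidiagonal.mem_antidiagonal, mem_product] at hx
    obtain rfl : u = a + l := hx.2.1.symm
    obtain rfl : v = b + j := hx.2.2.symm
    rfl
  · rintro ⟨⟨s, r⟩, ⟨⟨a, b⟩, ⟨l, j⟩⟩⟩ hx
    dsimp only
    simp only [mem_sigma, Finset.HasAntidiagonal.mem_antidiagonal, mem_product] at hx
    obtain rfl : s = a + b := hx.2.1.symm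
    obtain rfl : r = l + j := hx.2.2.symm
    rfl
  · rintro ⟨⟨u, v⟩, ⟨⟨a, l⟩, ⟨b, j⟩⟩⟩ _
    rfl

lemma sum_range_split {M : Type*} [AddCommMonoid M] (f : ℕ → M) (m : ℕ) (hm : 1 ≤ m) :
    ∑ r ∈ range (m + 1), f r = f 0 + f m + ∑ r ∈ Icc 1 (m - 1), f r := by
  have h : range (m + 1) = insert 0 (insert m (Icc 1 (m - 1))) := by
    ext x; simp only [mem_range, mem_insert, mem_Icc]; omega
  rw [h, Finset.sum_insert, Finset.sum_insert, ← add_assoc]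
  · simp only [mem_Icc]; omega
  · simp only [mem_insert, mem_Icc]; omega

/-- The series `Δ(A(t)) = Σ_l A(t)^{l+1} ⊗ a_l t^l` (with `a_0 = 1`). -/
noncomputable def Bps : PowerSeries (Hdif ⊗[ℂ] Hdif) := PowerSeries.mk fun p =>
  ∑ sr ∈ antidiagonal p,
    (coeff (R := Hdif) sr.1 (Aps ^ (sr.2 + 1))) ⊗ₜ[ℂ] (coeff (R := Hdif) sr.2 Aps)

lemma map_Δdif_Aps : PowerSeries.map (Δdif : Hdif →+* Hdif ⊗[ℂ] Hdif) Aps = Bps := by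
  ext p
  rw [PowerSeries.coeff_map, coeff_Aps, Bps, coeff_mk]
  simp only [RingHom.coe_coe]
  rcases Nat.eq_zero_or_pos p with rfl | hp
  · rw [if_pos rfl, map_one, Finset.Nat.antidiagonal_zero, Finset.sum_singleton]
    rw [coeff_zero_Aps_pow, coeff_Aps, if_pos rfl, Algebra.TensorProduct.one_def]
  · rw [if_neg (by omega)]
    have hΔ : Δdif (gen p) = 1 ⊗ₜ[ℂ] gen p + gen p ⊗ₜ[ℂ] 1 +
        ∑ m ∈ Finset.Icc 1 (p - 1), Qp gen (p - m) m ⊗ₜ[ℂ] gen (p - m) := by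
      rw [Δdif, gen, FreeAlgebra.lift_ι_apply]
    rw [hΔ, Finset.Nat.sum_antidiagonal_eq_sum_range_succ_mk, sum_range_split _ p hp]
    have h0 : coeff (R := Hdif) 0 (Aps ^ (p - 0 + 1)) ⊗ₜ[ℂ] coeff (R := Hdif) (p - 0) Aps
        = 1 ⊗ₜ[ℂ] gen p := by
      rw [coeff_zero_Aps_pow, Nat.sub_zero, coeff_Aps, if_neg (by omega)]
    have hm : coeff (R := Hdif) p (Aps ^ (p - p + 1)) ⊗ₜ[ℂ] coeff (R := Hdif) (p - p) Aps
        = gen p ⊗ₜ[ℂ] 1 := by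
      rw [Nat.sub_self, pow_one, coeff_Aps, coeff_Aps, if_neg (by omega), if_pos rfl]
    rw [h0, hm]
    congr 1
    apply Finset.sum_congr rfl
    intro k hk
    rw [Finset.mem_Icc] at hk
    rw [coeff_Aps_pow (p - k) (by omega), coeff_Aps, if_neg (by omega)]

lemma coeff_Bps_pow (N p : ℕ) :
    coeff (R := Hdif ⊗[ℂ] Hdif) p (Bps ^ N) =
      ∑ sr ∈ antidiagonal p,
        (coeff (R := Hdif) sr.1 (Aps ^ (N + sr.2))) ⊗ₜ[ℂ] (coeff (R := Hdif) sr.2 (Aps ^ N)) := by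
  induction N generalizing p with
  | zero =>
    rw [pow_zero, PowerSeries.coeff_one]
    rcases Nat.eq_zero_or_pos p with rfl | hp
    · rw [if_pos rfl, Finset.Nat.antidiagonal_zero, Finset.sum_singleton]
      rw [coeff_zero_Aps_pow, coeff_zero_Aps_pow, Algebra.TensorProduct.one_def]
    · rw [if_neg (by omega)]
      symm
      apply Finset.sum_eq_zero
      rintro ⟨s, r⟩ hsr
      have hsr' : s + r = p := by simpa using hsr
      rcases Nat.eq_zero_or_pos r with rfl | hr
      · dsimp only
        rw [add_zero, pow_zero, PowerSeries.coeff_one, if_neg (show ¬ s = 0 by omega),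
          TensorProduct.zero_tmul]
      · dsimp only
        rw [pow_zero, PowerSeries.coeff_one, if_neg (show ¬ r = 0 by omega),
          TensorProduct.tmul_zero]
  | succ N ih =>
    rw [pow_succ, coeff_mul]
    have hB : ∀ v, coeff (R := Hdif ⊗[ℂ] Hdif) v Bps =
        ∑ bj ∈ antidiagonal v,
          (coeff (R := Hdif) bj.1 (Aps ^ (bj.2 + 1))) ⊗ₜ[ℂ] (coeff (R := Hdif) bj.2 Aps) :=
      fun v => coeff_mk v _
    simp_rw [ih, hB, Finset.sum_mul, Finset.mul_sum, Algebra.TensorProduct.tmul_mul_tmul]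
    rw [quad p (fun a l b j => (coeff (R := Hdif) a (Aps ^ (N + l)) * coeff (R := Hdif) b (Aps ^ (j + 1)))
      ⊗ₜ[ℂ] (coeff (R := Hdif) l (Aps ^ N) * coeff (R := Hdif) j Aps))]
    apply Finset.sum_congr rfl
    rintro ⟨s, r⟩ hsr
    rw [Finset.HasAntidiagonal.mem_antidiagonal] at hsr
    rw [Finset.sum_comm]
    have inner : ∀ lj ∈ antidiagonal r,
        (∑ ab ∈ antidiagonal s,
          (coeff (R := Hdif) ab.1 (Aps ^ (N + lj.1)) * coeff (R := Hdif) ab.2 (Aps ^ (lj.2 + 1)))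
            ⊗ₜ[ℂ] (coeff (R := Hdif) lj.1 (Aps ^ N) * coeff (R := Hdif) lj.2 Aps))
        = (coeff (R := Hdif) s (Aps ^ (N + 1 + r)))
            ⊗ₜ[ℂ] (coeff (R := Hdif) lj.1 (Aps ^ N) * coeff (R := Hdif) lj.2 Aps) := by
      rintro ⟨l, j⟩ hlj
      have hlj' : l + j = r := by simpa using hlj
      rw [← TensorProduct.sum_tmul, ← coeff_mul, ← pow_add,
        show N + l + (j + 1) = N + 1 + r by omega]
    rw [Finset.sum_congr rfl inner, ← TensorProduct.tmul_sum, ← coeff_mul, ← pow_succ]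

/-- `Δ(Q^n_m) = 1 ⊗ Q^n_m + Q^n_m ⊗ 1 + Σ_{k=1}^{m-1} Q^{n+m-k}_k ⊗ Q^n_{m-k}`
for `m ≥ 1` and `n ≥ 0` (for `m = 1` the sum is empty and `Q^n_1` is primitive). -/
theorem Δdif_Qp (n m : ℕ) (hm : 1 ≤ m) :
    Δdif (Qp gen n m) =
      1 ⊗ₜ[ℂ] Qp gen n m + Qp gen n m ⊗ₜ[ℂ] 1 +
        ∑ k ∈ Finset.Icc 1 (m - 1), Qp gen (n + m - k) k ⊗ₜ[ℂ] Qp gen n (m - k) := by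
  have key : Δdif (Qp gen n m) = ∑ sr ∈ antidiagonal m,
      (coeff (R := Hdif) sr.1 (Aps ^ (n + 1 + sr.2))) ⊗ₜ[ℂ] (coeff (R := Hdif) sr.2 (Aps ^ (n + 1))) := by
    conv_lhs => rw [← coeff_Aps_pow n hm]
    have : Δdif ((coeff (R := Hdif) m) (Aps ^ (n + 1)))
        = coeff (R := Hdif ⊗[ℂ] Hdif) m
            (PowerSeries.map (Δdif : Hdif →+* Hdif ⊗[ℂ] Hdif) (Aps ^ (n + 1))) := by
      rw [PowerSeries.coeff_map]; rfl
    rw [this, map_pow, map_Δdif_Aps, coeff_Bps_pow]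
  rw [key, Finset.Nat.sum_antidiagonal_eq_sum_range_succ_mk, sum_range_split _ m hm]
  have h0 : coeff (R := Hdif) 0 (Aps ^ (n + 1 + (m - 0))) ⊗ₜ[ℂ] coeff (R := Hdif) (m - 0) (Aps ^ (n + 1))
      = 1 ⊗ₜ[ℂ] Qp gen n m := by
    rw [coeff_zero_Aps_pow, Nat.sub_zero, coeff_Aps_pow n hm]
  have hmm : coeff (R := Hdif) m (Aps ^ (n + 1 + (m - m))) ⊗ₜ[ℂ] coeff (R := Hdif) (m - m) (Aps ^ (n + 1))
      = Qp gen n m ⊗ₜ[ℂ] 1 := by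
    rw [Nat.sub_self, add_zero, coeff_Aps_pow n hm, coeff_zero_Aps_pow]
  rw [h0, hmm]
  congr 1
  apply Finset.sum_congr rfl
  intro k hk
  rw [Finset.mem_Icc] at hk
  rw [show n + 1 + (m - k) = (n + (m - k)) + 1 by omega,
    coeff_Aps_pow (n + (m - k)) (show 1 ≤ k by omega),
    coeff_Aps_pow n (show 1 ≤ m - k by omega),
    show n + (m - k) = n + m - k by omega]
end
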